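/- For the generalized SVF model with curl and divergence penalties, min_{u,w} (λ/2)‖u−f‖₂² + ‖∇u − w‖₁ + β‖∇×w‖₁ + γ‖∇·w‖₁: in the limit β, γ → ∞ (or for β, γ sufficiently large in the discrete setting), minimizers satisfy ∇×w = 0 and ∇·w = 0, hence (on a simply connected domain with suitable boundary conditions) w is constant, and the problem reduces to the ROF model min_u (λ/2)‖u−f‖₂² + ‖∇u − w₀‖₁ over constant fields w₀. -/

import Mathlib

open scoped RealInnerProductSpace

/-- exact penalization for the generalized SVF model (discrete,
finite-dimensional setting, with abstract gradient/curl/divergence operators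
and L¹-type norms given by the norms of the target spaces): there are
thresholds `β₀, γ₀` such that for all `β ≥ β₀`, `γ ≥ γ₀`, every minimizer
`(u,w)` of `(λ/2)‖u-f‖² + ‖grad u - w‖ + β‖curl w‖ + γ‖div w‖` satisfies
`curl w = 0` and `div w = 0`, and `(u,w)` minimizes the reduced objective
`(λ/2)‖u-f‖² + ‖grad u - w'‖` over the curl- and divergence-free fields,
i.e. the problem reduces to the ROF-type constrained model. -/
theorem exact_penalization_reduces_to_rof
    {E F G H' : Type*}
    [NormedAddCommGroup E] [InnerProductSpace ℝ E] [FiniteDimensional ℝ E]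
    [NormedAddCommGroup F] [NormedSpace ℝ F] [FiniteDimensional ℝ F]
    [NormedAddCommGroup G] [NormedSpace ℝ G] [FiniteDimensional ℝ G]
    [NormedAddCommGroup H'] [NormedSpace ℝ H'] [FiniteDimensional ℝ H']
    (grad : E →ₗ[ℝ] F) (curl : F →ₗ[ℝ] G) (dvg : F →ₗ[ℝ] H')
    (f : E) (lam : ℝ) (hlam : 0 < lam) :
    ∃ β₀ γ₀ : ℝ, ∀ β γ : ℝ, β₀ ≤ β → γ₀ ≤ γ →
      ∀ (u : E) (w : F),
        (∀ (u' : E) (w' : F),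
          lam / 2 * ‖u - f‖ ^ 2 + ‖grad u - w‖ + β * ‖curl w‖ + γ * ‖dvg w‖
            ≤ lam / 2 * ‖u' - f‖ ^ 2 + ‖grad u' - w'‖ + β * ‖curl w'‖ + γ * ‖dvg w'‖) →
        curl w = 0 ∧ dvg w = 0 ∧
          ∀ (u' : E) (w' : F), curl w' = 0 → dvg w' = 0 →
            lam / 2 * ‖u - f‖ ^ 2 + ‖grad u - w‖
              ≤ lam / 2 * ‖u' - f‖ ^ 2 + ‖grad u' - w'‖ := by
  classical
  set T : F →ₗ[ℝ] G × H' := curl.prod dvg with hTdef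
  -- a complement of the range of T and a right inverse on the range
  obtain ⟨q, hq⟩ := Submodule.exists_isCompl (LinearMap.range T)
  obtain ⟨S', hS'⟩ := T.rangeRestrict.exists_rightInverse_of_surjective
      (LinearMap.range_rangeRestrict T)
  set S : (G × H') →ₗ[ℝ] F :=
    S'.comp (Submodule.linearProjOfIsCompl (LinearMap.range T) q hq) with hSdef
  have key : ∀ w : F, T (S (T w)) = T w := by
    intro w
    have h1 : (Submodule.linearProjOfIsCompl (LinearMap.range T) q hq) (T w)
        = ⟨T w, LinearMap.mem_range_self T w⟩ :=
      Submodule.linearProjOfIsCompl_apply_left hq ⟨T w, LinearMap.mem_range_self T w⟩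
    have h2 : T.rangeRestrict (S' ⟨T w, LinearMap.mem_range_self T w⟩)
        = ⟨T w, LinearMap.mem_range_self T w⟩ := by
      have := congrArg (fun L => L ⟨T w, LinearMap.mem_range_self T w⟩) hS'
      simpa only [LinearMap.comp_apply, LinearMap.id_apply] using this
    have h3 : T (S' ⟨T w, LinearMap.mem_range_self T w⟩) = T w :=
      congrArg Subtype.val h2
    simp [hSdef, h1, h3]
  -- operator norm of S
  let Sc : (G × H') →L[ℝ] F := LinearMap.toContinuousLinearMap S
  set C : ℝ := ‖Sc‖ with hC
  have hSnorm : ∀ v : G × H', ‖S v‖ ≤ C * ‖v‖ := fun v => Sc.le_opNorm v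
  have hC0 : 0 ≤ C := norm_nonneg _
  refine ⟨C + 1, C + 1, ?_⟩
  intro β γ hβ hγ u w hmin
  -- the projected field
  set ww : F := w - S (T w) with hww
  have hTww : T ww = 0 := by
    simp [hww, map_sub, key w]
  have hcurlww : curl ww = 0 := by
    have := congrArg Prod.fst hTww
    simpa [hTdef, LinearMap.prod_apply] using this
  have hdvgww : dvg ww = 0 := by
    have := congrArg Prod.snd hTww
    simpa [hTdef, LinearMap.prod_apply] using this
  -- bound the move
  have hTwnorm : ‖T w‖ ≤ ‖curl w‖ + ‖dvg w‖ := by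
    have : T w = (curl w, dvg w) := rfl
    rw [this, Prod.norm_def]
    exact max_le (le_add_of_nonneg_right (norm_nonneg _))
      (le_add_of_nonneg_left (norm_nonneg _))
  have hmove : ‖grad u - ww‖ ≤ ‖grad u - w‖ + C * (‖curl w‖ + ‖dvg w‖) := by
    have h1 : grad u - ww = (grad u - w) + S (T w) := by
      rw [hww]; abel
    calc ‖grad u - ww‖ = ‖(grad u - w) + S (T w)‖ := by rw [h1]
      _ ≤ ‖grad u - w‖ + ‖S (T w)‖ := norm_add_le _ _
      _ ≤ ‖grad u - w‖ + C * ‖T w‖ := by linarith [hSnorm (T w)]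
      _ ≤ ‖grad u - w‖ + C * (‖curl w‖ + ‖dvg w‖) := by nlinarith
  -- use minimality against (u, ww)
  have hmin1 := hmin u ww
  rw [hcurlww, hdvgww] at hmin1
  simp only [norm_zero, mul_zero, add_zero] at hmin1
  have hkey : β * ‖curl w‖ + γ * ‖dvg w‖ ≤ C * (‖curl w‖ + ‖dvg w‖) := by
    linarith
  have ha : (0:ℝ) ≤ ‖curl w‖ := norm_nonneg _
  have hb : (0:ℝ) ≤ ‖dvg w‖ := norm_nonneg _
  have h1' : (C+1) * ‖curl w‖ ≤ β * ‖curl w‖ := mul_le_mul_of_nonneg_right hβ ha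
  have h2' : (C+1) * ‖dvg w‖ ≤ γ * ‖dvg w‖ := mul_le_mul_of_nonneg_right hγ hb
  have hexp : (C+1) * ‖curl w‖ + (C+1) * ‖dvg w‖
      = C * (‖curl w‖ + ‖dvg w‖) + (‖curl w‖ + ‖dvg w‖) := by ring
  have hs : ‖curl w‖ + ‖dvg w‖ ≤ 0 := by linarith
  have hzero : ‖curl w‖ = 0 ∧ ‖dvg w‖ = 0 :=
    ⟨le_antisymm (by linarith) ha, le_antisymm (by linarith) hb⟩
  have hcw : curl w = 0 := norm_eq_zero.mp hzero.1
  have hdw : dvg w = 0 := norm_eq_zero.mp hzero.2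
  refine ⟨hcw, hdw, ?_⟩
  intro u' w' h1 h2
  have := hmin u' w'
  rw [hcw, hdw, h1, h2] at this
  simpa using this
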